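/- Let g₁, g₂ be (2π)-periodic locally integrable functions with g_i(λ) = |λ|^{-β_i} g_i*(λ) on (-π,π), where β₁, β₂ ∈ (0,1), β₁ + β₂ < 1, and each g_i* is (2π)-periodic, nonnegative, bounded on (-π,π), positive at 0 and continuous at 0. Then the periodic convolution g(λ) = ∫_{-π}^π g₁(u) g₂(λ-u) du is bounded and continuous on (-π,π) and satisfies g(0) > 0. -/

import Mathlib

open MeasureTheory Real intervalIntegral

open Filter Set
open scoped ENNReal

lemma aux_translate_tendsto {q : ℝ≥0∞} (hq1 : 1 ≤ q) (hqt : q ≠ ∞) {h : ℝ → ℝ}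
    (hh : MeasureTheory.MemLp h q (volume : Measure ℝ)) :
    Filter.Tendsto (fun t : ℝ => eLpNorm (fun v => h (v + t) - h v) q volume)
      (nhds 0) (nhds 0) := by
  have hq0 : q ≠ 0 := fun h0 => by simp [h0] at hq1
  rw [ENNReal.tendsto_nhds_zero]
  intro ε hε
  set ε' := min ε 1 with hε'def
  have hε'0 : ε' ≠ 0 := by
    have : (0:ℝ≥0∞) < ε' := lt_min hε (by norm_num)
    exact this.ne'
  have hε'top : ε' ≠ ∞ := (lt_of_le_of_lt (min_le_right _ _) (by norm_num)).ne
  have hε'3 : ε' / 3 ≠ 0 := by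
    simp [ENNReal.div_eq_zero_iff, hε'0]
  obtain ⟨φ, φsupp, hφapprox, φcont, φmem⟩ :=
    hh.exists_hasCompactSupport_eLpNorm_sub_le hqt hε'3
  obtain ⟨R, hR⟩ := φsupp.isBounded.subset_closedBall (0:ℝ)
  set K : Set ℝ := Metric.closedBall (0:ℝ) (R + 1) with hKdef
  have hKmeas : MeasurableSet K := Metric.isClosed_closedBall.measurableSet
  set M : ℝ≥0∞ := volume K ^ (1 / q.toReal) + 1 with hMdef
  have hM0 : M ≠ 0 := by
    simp only [hMdef]; intro hc; simp at hc
  have hMtop : M ≠ ∞ := by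
    refine ENNReal.add_ne_top.2 ⟨?_, by norm_num⟩
    exact (ENNReal.rpow_lt_top_of_nonneg (by positivity) measure_closedBall_lt_top.ne).ne
  have hdivtop : ε' / 3 / M ≠ ∞ :=
    (ENNReal.div_lt_top (ENNReal.div_lt_top hε'top (by norm_num)).ne hM0).ne
  have hdiv0 : ε' / 3 / M ≠ 0 :=
    (ENNReal.div_pos hε'3 hMtop).ne'
  set c : ℝ := (ε' / 3 / M).toReal with hcdef
  have hc0 : 0 < c := ENNReal.toReal_pos hdiv0 hdivtop
  have hφuc : UniformContinuous φ := φsupp.uniformContinuous_of_continuous φcont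
  obtain ⟨δ, hδ0, hδ⟩ := Metric.uniformContinuous_iff.mp hφuc c hc0
  have hmp : ∀ t : ℝ, MeasurePreserving (fun x : ℝ => x + t) volume volume :=
    fun t => measurePreserving_add_right volume t
  filter_upwards [Metric.ball_mem_nhds (0:ℝ) (lt_min hδ0 one_pos)] with t ht
  have ht' : |t| < min δ 1 := by simpa [Real.dist_eq] using ht
  have hmid : eLpNorm (fun x => φ (x + t) - φ x) q volume ≤ ε' / 3 := by
    have hbound : ∀ x : ℝ, ‖φ (x + t) - φ x‖ ≤ ‖K.indicator (fun _ => c) x‖ := by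
      intro x
      by_cases hx : x ∈ K
      · rw [Set.indicator_of_mem hx]
        have : dist (x + t) x < δ := by
          simp only [Real.dist_eq, add_sub_cancel_left]
          exact ht'.trans_le (min_le_left _ _)
        have := hδ this
        rw [Real.dist_eq] at this
        rw [Real.norm_eq_abs, Real.norm_eq_abs, abs_of_pos hc0]
        exact this.le
      · rw [Set.indicator_of_notMem hx]
        have hx1 : R + 1 < |x| := by
          simpa [hKdef, Metric.mem_closedBall, Real.dist_eq, not_le] using hx
        have hφx : φ x = 0 := by
          apply image_eq_zero_of_notMem_tsupport
          intro hmem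
          have := hR hmem
          simp only [Metric.mem_closedBall, Real.dist_eq, sub_zero] at this
          linarith [abs_nonneg x]
        have hφxt : φ (x + t) = 0 := by
          apply image_eq_zero_of_notMem_tsupport
          intro hmem
          have h1 := hR hmem
          simp only [Metric.mem_closedBall, Real.dist_eq, sub_zero] at h1
          have : |x| ≤ |x + t| + |t| := by
            calc |x| = |(x + t) + (-t)| := by ring_nf
            _ ≤ |x + t| + |(-t)| := abs_add_le _ _
            _ = |x + t| + |t| := by rw [abs_neg]
          have ht1 : |t| < 1 := ht'.trans_le (min_le_right _ _)
          linarith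
        simp [hφx, hφxt]
    calc eLpNorm (fun x => φ (x + t) - φ x) q volume
        ≤ eLpNorm (K.indicator (fun _ => c)) q volume :=
          eLpNorm_mono hbound
      _ = ‖c‖₊ * volume K ^ (1 / q.toReal) := eLpNorm_indicator_const hKmeas hq0 hqt
      _ ≤ ENNReal.ofReal c * M := by
          rw [← enorm_eq_nnnorm, enorm_eq_ofReal hc0.le]
          exact mul_le_mul_right (le_add_right le_rfl) _
      _ = ε' / 3 / M * M := by rw [hcdef, ENNReal.ofReal_toReal hdivtop]
      _ = ε' / 3 := ENNReal.div_mul_cancel hM0 hMtop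
  have hAh : AEStronglyMeasurable h (volume : Measure ℝ) := hh.1
  have hAφ : AEStronglyMeasurable φ (volume : Measure ℝ) := φcont.aestronglyMeasurable
  have hAht : AEStronglyMeasurable (fun x => h (x + t)) (volume : Measure ℝ) :=
    hAh.comp_measurePreserving (hmp t)
  have hAφt : AEStronglyMeasurable (fun x => φ (x + t)) (volume : Measure ℝ) :=
    hAφ.comp_measurePreserving (hmp t)
  have he1 : eLpNorm (fun x => h (x + t) - φ (x + t)) q volume ≤ ε' / 3 := by
    have : (fun x => h (x + t) - φ (x + t)) = (h - φ) ∘ (fun x => x + t) := rfl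
    rw [this, eLpNorm_comp_measurePreserving (hh.sub φmem).1 (hmp t)]
    exact hφapprox
  have he3 : eLpNorm (fun x => φ x - h x) q volume ≤ ε' / 3 := by
    have : (fun x => φ x - h x) = -(h - φ) := by funext x; simp [Pi.sub_apply]
    rw [this, eLpNorm_neg]
    exact hφapprox
  calc eLpNorm (fun v => h (v + t) - h v) q volume
      = eLpNorm ((fun x => h (x + t) - φ (x + t)) + ((fun x => φ (x + t) - φ x)
          + (fun x => φ x - h x))) q volume := by
        congr 1; funext x; simp only [Pi.add_apply]; ring
    _ ≤ eLpNorm (fun x => h (x + t) - φ (x + t)) q volume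
        + eLpNorm ((fun x => φ (x + t) - φ x) + (fun x => φ x - h x)) q volume :=
        eLpNorm_add_le (hAht.sub hAφt) ((hAφt.sub hAφ).add (hAφ.sub hAh)) hq1
    _ ≤ eLpNorm (fun x => h (x + t) - φ (x + t)) q volume
        + (eLpNorm (fun x => φ (x + t) - φ x) q volume
          + eLpNorm (fun x => φ x - h x) q volume) := by
        gcongr
        exact eLpNorm_add_le (hAφt.sub hAφ) (hAφ.sub hAh) hq1
    _ ≤ ε' / 3 + (ε' / 3 + ε' / 3) := by gcongr
    _ = ε' := by rw [← add_assoc]; exact ENNReal.add_thirds ε'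
    _ ≤ ε := min_le_left _ _

lemma aux_abs_rpow_intervalIntegrable {γ : ℝ} (hγ : γ < 1) (a b : ℝ) :
    IntervalIntegrable (fun x => |x| ^ (-γ)) volume a b := by
  have H : ∀ c : ℝ, 0 ≤ c → IntervalIntegrable (fun x => |x| ^ (-γ)) volume 0 c := by
    intro c hc
    rw [intervalIntegrable_iff, uIoc_of_le hc]
    have base : IntegrableOn (fun x : ℝ => x ^ (-γ)) (Ioc 0 c) volume := by
      have := intervalIntegral.intervalIntegrable_rpow' (a := 0) (b := c)
        (show (-1:ℝ) < -γ by linarith)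
      rwa [intervalIntegrable_iff, uIoc_of_le hc] at this
    exact base.congr_fun (fun x hx => by rw [abs_of_pos hx.1]) measurableSet_Ioc
  have H' : ∀ c : ℝ, IntervalIntegrable (fun x => |x| ^ (-γ)) volume 0 c := by
    intro c
    rcases le_total 0 c with hc | hc
    · exact H c hc
    · rw [IntervalIntegrable.iff_comp_neg]
      simpa [abs_neg] using H (-c) (by linarith)
  exact (H' a).symm.trans (H' b)

lemma aux_abs_rpow_integrableOn {γ : ℝ} (hγ : γ < 1) (c a b : ℝ) :
    IntegrableOn (fun x => |x - c| ^ (-γ)) (Ioo a b) volume := by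
  rcases le_total a b with hab | hab
  · have := (aux_abs_rpow_intervalIntegrable hγ (a - c) (b - c)).comp_sub_right c
    rw [sub_add_cancel, sub_add_cancel, intervalIntegrable_iff, uIoc_of_le hab] at this
    exact this.mono_set Ioo_subset_Ioc_self
  · rw [Ioo_eq_empty_of_le hab]
    exact integrableOn_empty

lemma aux_memLp_of_rpow {f : ℝ → ℝ} {μ : Measure ℝ} {p : ℝ} (hp : 1 ≤ p)
    (hmeas : AEStronglyMeasurable f μ) (hint : Integrable (fun x => |f x| ^ p) μ) :
    MemLp f (ENNReal.ofReal p) μ := by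
  have hp0 : (0:ℝ) < p := lt_of_lt_of_le one_pos hp
  have hp'0 : ENNReal.ofReal p ≠ 0 := by simp [ENNReal.ofReal_eq_zero, not_le, hp0]
  have hp't : ENNReal.ofReal p ≠ ∞ := ENNReal.ofReal_ne_top
  rw [← memLp_norm_rpow_iff hmeas hp'0 hp't, ENNReal.div_self hp'0 hp't,
    ENNReal.toReal_ofReal hp0.le, memLp_one_iff_integrable]
  simpa [Real.norm_eq_abs] using hint

/-- Periodic convolution of two periodic power-singular functions:
    case β₁ + β₂ < 1, the convolution is bounded, continuous on (-π,π) and positive at 0. -/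
theorem stmt8 (β₁ β₂ : ℝ) (hβ₁ : β₁ ∈ Set.Ioo (0:ℝ) 1) (hβ₂ : β₂ ∈ Set.Ioo (0:ℝ) 1)
    (hsum : β₁ + β₂ < 1)
    (g₁ g₂ g₁s g₂s : ℝ → ℝ)
    (hper₁ : Function.Periodic g₁ (2 * π)) (hper₂ : Function.Periodic g₂ (2 * π))
    (hint₁ : IntegrableOn g₁ (Set.Ioo (-π) π)) (hint₂ : IntegrableOn g₂ (Set.Ioo (-π) π))
    (hrep₁ : ∀ x ∈ Set.Ioo (-π) π, x ≠ 0 → g₁ x = |x| ^ (-β₁) * g₁s x)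
    (hrep₂ : ∀ x ∈ Set.Ioo (-π) π, x ≠ 0 → g₂ x = |x| ^ (-β₂) * g₂s x)
    (hpers₁ : Function.Periodic g₁s (2 * π)) (hpers₂ : Function.Periodic g₂s (2 * π))
    (hnn₁ : ∀ x, 0 ≤ g₁s x) (hnn₂ : ∀ x, 0 ≤ g₂s x)
    (hbd₁ : ∃ B, ∀ x ∈ Set.Ioo (-π) π, g₁s x ≤ B)
    (hbd₂ : ∃ B, ∀ x ∈ Set.Ioo (-π) π, g₂s x ≤ B)
    (hpos₁ : 0 < g₁s 0) (hpos₂ : 0 < g₂s 0)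
    (hcont₁ : ContinuousAt g₁s 0) (hcont₂ : ContinuousAt g₂s 0) :
    (∃ B, ∀ x ∈ Set.Ioo (-π) π, |∫ u in (-π)..π, g₁ u * g₂ (x - u)| ≤ B)
    ∧ ContinuousOn (fun x => ∫ u in (-π)..π, g₁ u * g₂ (x - u)) (Set.Ioo (-π) π)
    ∧ 0 < ∫ u in (-π)..π, g₁ u * g₂ (0 - u) := by
  obtain ⟨hβ₁0, hβ₁1⟩ := hβ₁
  obtain ⟨hβ₂0, hβ₂1⟩ := hβ₂
  have hπ : (0:ℝ) < π := Real.pi_pos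
  obtain ⟨B₁, hB₁⟩ := hbd₁
  obtain ⟨B₂, hB₂⟩ := hbd₂
  -- conjugate exponents
  set θ : ℝ := (β₁ + (1 - β₂)) / 2 with hθdef
  have hθa : β₁ < θ := by rw [hθdef]; linarith
  have hθb : θ < 1 - β₂ := by rw [hθdef]; linarith
  have hθ0 : 0 < θ := lt_trans hβ₁0 hθa
  have hθ1 : θ < 1 := by linarith
  set pe : ℝ := θ⁻¹ with hpedef
  set qe : ℝ := (1 - θ)⁻¹ with hqedef
  have hpe1 : 1 < pe := one_lt_inv_iff₀.2 ⟨hθ0, hθ1⟩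
  have hqe1 : 1 < qe := one_lt_inv_iff₀.2 ⟨by linarith, by linarith⟩
  have hpe0 : (0:ℝ) < pe := by linarith
  have hqe0 : (0:ℝ) < qe := by linarith
  have hpq : pe.HolderConjugate qe := Real.holderConjugate_iff.2 ⟨hpe1, by rw [hpedef, hqedef, inv_inv, inv_inv]; ring⟩
  have hγ₁ : β₁ * pe < 1 := by
    rw [hpedef, ← div_eq_mul_inv, div_lt_one hθ0]; exact hθa
  have hγ₂ : β₂ * qe < 1 := by
    rw [hqedef, ← div_eq_mul_inv, div_lt_one (by linarith : (0:ℝ) < 1 - θ)]; linarith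
  set p' : ℝ≥0∞ := ENNReal.ofReal pe with hp'def
  set q' : ℝ≥0∞ := ENNReal.ofReal qe with hq'def
  have hq'1 : (1:ℝ≥0∞) ≤ q' := by
    rw [hq'def, ← ENNReal.ofReal_one]
    exact ENNReal.ofReal_le_ofReal hqe1.le
  have hq't : q' ≠ ∞ := ENNReal.ofReal_ne_top
  have hconj : (1:ℝ≥0∞) / 1 = 1 / p' + 1 / q' := by
    rw [hp'def, hq'def, one_div, one_div, one_div, inv_one,
      ← ENNReal.ofReal_inv_of_pos hpe0, ← ENNReal.ofReal_inv_of_pos hqe0,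
      ← ENNReal.ofReal_add (by positivity) (by positivity), hpq.inv_add_inv_eq_one,
      ENNReal.ofReal_one]
  haveI : ENNReal.HolderTriple p' q' 1 := ⟨by simpa [one_div] using hconj.symm⟩
  -- sets
  have hIm : MeasurableSet (Ioo (-π) π) := measurableSet_Ioo
  have hJm : MeasurableSet (Ioo (-(2*π)) (2*π)) := measurableSet_Ioo
  set h₂ : ℝ → ℝ := (Ioo (-(2*π)) (2*π)).indicator g₂ with hh₂def
  have h3pts : ∀ᵐ x : ℝ ∂(volume : Measure ℝ), x ∉ ({-π, 0, π} : Set ℝ) := by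
    have h0 : (volume : Measure ℝ) ({-π, 0, π} : Set ℝ) = 0 :=
      (Set.toFinite _).measure_zero _
    have hset : {x : ℝ | ¬ x ∉ ({-π, 0, π} : Set ℝ)} = ({-π, 0, π} : Set ℝ) := by
      ext x; simp [or_iff_not_imp_left]
    rw [ae_iff, hset]; exact h0
  -- MemLp for g₁
  have hg₁meas : AEStronglyMeasurable g₁ (volume.restrict (Ioo (-π) π)) := hint₁.1
  have hg₁bd : ∀ x ∈ Ioo (-π) π, x ≠ 0 → ‖g₁ x‖ ≤ ‖(max B₁ 0) * |x| ^ (-β₁)‖ := by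
    intro x hx hx0
    have h1 : (0:ℝ) ≤ |x| ^ (-β₁) := rpow_nonneg (abs_nonneg x) _
    rw [Real.norm_eq_abs, hrep₁ x hx hx0, abs_of_nonneg (mul_nonneg h1 (hnn₁ x))]
    refine le_trans ?_ (le_abs_self _)
    rw [mul_comm (max B₁ 0)]
    exact mul_le_mul_of_nonneg_left ((hB₁ x hx).trans (le_max_left _ _)) h1
  have hpow₁ : MemLp (fun x => |x| ^ (-β₁)) p' (volume.restrict (Ioo (-π) π)) := by
    apply aux_memLp_of_rpow hpe1.le ((by fun_prop : Measurable fun x : ℝ => |x| ^ (-β₁)).aestronglyMeasurable)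
    have hint : IntegrableOn (fun x => |x - 0| ^ (-(β₁ * pe))) (Ioo (-π) π) volume :=
      aux_abs_rpow_integrableOn hγ₁ 0 _ _
    simp only [sub_zero] at hint
    refine hint.congr_fun (fun x _ => ?_) hIm
    rw [abs_of_nonneg (rpow_nonneg (abs_nonneg x) _), ← Real.rpow_mul (abs_nonneg x), neg_mul]
  have hg₁Lp : MemLp g₁ p' (volume.restrict (Ioo (-π) π)) := by
    refine MemLp.of_le (hpow₁.const_mul (max B₁ 0)) hg₁meas ?_
    filter_upwards [ae_restrict_mem hIm, ae_restrict_of_ae h3pts] with x hx hx3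
    exact hg₁bd x hx (fun h0 => hx3 (by simp [h0]))
  -- a.e. strong measurability of g₂ on the doubled interval
  have hg₂measJ : AEStronglyMeasurable g₂ (volume.restrict (Ioo (-(2*π)) (2*π))) := by
    have base : AEStronglyMeasurable g₂ (volume.restrict (Ioo (-π) π)) := hint₂.1
    have left : AEStronglyMeasurable g₂ (volume.restrict (Ioo (-(3*π)) (-π))) := by
      have hmp := (measurePreserving_add_right (volume : Measure ℝ) (2*π)).restrict_preimage hIm
      have hpre : (fun x : ℝ => x + 2*π) ⁻¹' (Ioo (-π) π) = Ioo (-(3*π)) (-π) := by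
        ext x
        simp only [mem_preimage, mem_Ioo]
        constructor <;> rintro ⟨u1, u2⟩ <;> constructor <;> linarith
      rw [hpre] at hmp
      have hcomp := base.comp_measurePreserving hmp
      have heq : g₂ ∘ (fun x : ℝ => x + 2*π) = g₂ := funext fun x => hper₂ x
      rwa [heq] at hcomp
    have right : AEStronglyMeasurable g₂ (volume.restrict (Ioo π (3*π))) := by
      have hmp := (measurePreserving_add_right (volume : Measure ℝ) (-(2*π))).restrict_preimage hIm
      have hpre : (fun x : ℝ => x + -(2*π)) ⁻¹' (Ioo (-π) π) = Ioo π (3*π) := by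
        ext x
        simp only [mem_preimage, mem_Ioo]
        constructor <;> rintro ⟨u1, u2⟩ <;> constructor <;> linarith
      rw [hpre] at hmp
      have hcomp := base.comp_measurePreserving hmp
      have heq : g₂ ∘ (fun x : ℝ => x + -(2*π)) = g₂ := by
        funext x
        show g₂ (x + -(2*π)) = g₂ x
        rw [← sub_eq_add_neg]
        conv_rhs => rw [show x = x - 2*π + 2*π by ring, hper₂ (x - 2*π)]
      rwa [heq] at hcomp
    have mid : AEStronglyMeasurable g₂ (volume.restrict (Icc (-π) π)) := by
      rwa [← Measure.restrict_congr_set Ioo_ae_eq_Icc]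
    have union : AEStronglyMeasurable g₂
        (volume.restrict ((Ioo (-(3*π)) (-π) ∪ Icc (-π) π) ∪ Ioo π (3*π))) :=
      aestronglyMeasurable_union_iff.2 ⟨aestronglyMeasurable_union_iff.2 ⟨left, mid⟩, right⟩
    refine union.mono_measure (Measure.restrict_mono (fun x hx => ?_) le_rfl)
    obtain ⟨h1, h2⟩ := hx
    rcases lt_or_ge x (-π) with hc1 | hc1
    · exact Or.inl (Or.inl ⟨by linarith, hc1⟩)
    · rcases le_or_gt x π with hc2 | hc2
      · exact Or.inl (Or.inr ⟨hc1, hc2⟩)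
      · exact Or.inr ⟨hc2, by linarith⟩
  -- pointwise domination of g₂ on the doubled interval
  have hg₂bdJ : ∀ x ∈ Ioo (-(2*π)) (2*π), x ∉ ({-π, 0, π} : Set ℝ) →
      ‖g₂ x‖ ≤ ‖(max B₂ 0) * (|x| ^ (-β₂) + (|x - 2*π| ^ (-β₂) + |x + 2*π| ^ (-β₂)))‖ := by
    intro x hx hx3
    have hxne : ¬(x = -π ∨ x = 0 ∨ x = π) := by simpa using hx3
    push_neg at hxne
    obtain ⟨hne1, hne0, hne2⟩ := hxne
    obtain ⟨hxa, hxb⟩ := hx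
    have hB2' : ∀ y ∈ Ioo (-π) π, y ≠ 0 → ‖g₂ y‖ ≤ max B₂ 0 * |y| ^ (-β₂) := by
      intro y hy hy0
      have h1 : (0:ℝ) ≤ |y| ^ (-β₂) := rpow_nonneg (abs_nonneg y) _
      rw [Real.norm_eq_abs, hrep₂ y hy hy0, abs_of_nonneg (mul_nonneg h1 (hnn₂ y))]
      rw [mul_comm (max B₂ 0)]
      exact mul_le_mul_of_nonneg_left ((hB₂ y hy).trans (le_max_left _ _)) h1
    have hn1 : (0:ℝ) ≤ |x| ^ (-β₂) := rpow_nonneg (abs_nonneg _) _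
    have hn2 : (0:ℝ) ≤ |x - 2*π| ^ (-β₂) := rpow_nonneg (abs_nonneg _) _
    have hn3 : (0:ℝ) ≤ |x + 2*π| ^ (-β₂) := rpow_nonneg (abs_nonneg _) _
    have hBnn : (0:ℝ) ≤ max B₂ 0 := le_max_right _ _
    refine le_trans ?_ (le_abs_self _)
    rcases lt_trichotomy x (-π) with hc | hc | hc
    · have hmem : x + 2*π ∈ Ioo (-π) π := ⟨by linarith, by linarith⟩
      have hne : x + 2*π ≠ 0 := fun h0 => by linarith
      rw [← hper₂ x]
      refine le_trans (hB2' _ hmem hne) ?_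
      exact mul_le_mul_of_nonneg_left (by linarith) hBnn
    · exact absurd hc hne1
    · rcases lt_trichotomy x π with hc2 | hc2 | hc2
      · exact le_trans (hB2' _ ⟨hc, hc2⟩ hne0) (mul_le_mul_of_nonneg_left (by linarith) hBnn)
      · exact absurd hc2 hne2
      · have hmem : x - 2*π ∈ Ioo (-π) π := ⟨by linarith, by linarith⟩
        have hne : x - 2*π ≠ 0 := fun h0 => by linarith
        have hval := hper₂ (x - 2*π)
        rw [sub_add_cancel] at hval
        rw [hval]
        refine le_trans (hB2' _ hmem hne) ?_
        exact mul_le_mul_of_nonneg_left (by linarith) hBnn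
  -- MemLp of the dominating function and of h₂
  have hpow₂ : ∀ c : ℝ, MemLp (fun x => |x - c| ^ (-β₂)) q' (volume.restrict (Ioo (-(2*π)) (2*π))) := by
    intro c
    apply aux_memLp_of_rpow hqe1.le
      ((by fun_prop : Measurable fun x : ℝ => |x - c| ^ (-β₂)).aestronglyMeasurable)
    refine (aux_abs_rpow_integrableOn hγ₂ c (-(2*π)) (2*π)).congr_fun (fun x _ => ?_) hJm
    rw [abs_of_nonneg (rpow_nonneg (abs_nonneg _) _), ← Real.rpow_mul (abs_nonneg _), neg_mul]
  have hh₂mem : MemLp h₂ q' (volume : Measure ℝ) := by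
    rw [hh₂def, memLp_indicator_iff_restrict hJm]
    have h0 : MemLp (fun x : ℝ => |x| ^ (-β₂)) q' (volume.restrict (Ioo (-(2*π)) (2*π))) := by
      have := hpow₂ 0
      simpa using this
    have hm2 : MemLp (fun x : ℝ => |x + 2*π| ^ (-β₂)) q' (volume.restrict (Ioo (-(2*π)) (2*π))) := by
      have := hpow₂ (-(2*π))
      simpa [sub_neg_eq_add] using this
    have hsum' := (h0.add ((hpow₂ (2*π)).add hm2)).const_mul (max B₂ 0)
    refine MemLp.of_le hsum' hg₂measJ ?_
    filter_upwards [ae_restrict_mem hJm, ae_restrict_of_ae h3pts] with x hx hx3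
    exact hg₂bdJ x hx hx3
  -- main quantities
  set A := eLpNorm g₁ p' (volume.restrict (Ioo (-π) π)) with hAdef
  set N := eLpNorm h₂ q' (volume : Measure ℝ) with hNdef
  have hAlt : A < ∞ := hg₁Lp.2
  have hNlt : N < ∞ := hh₂mem.2
  have hANtop : A * N ≠ ∞ := ENNReal.mul_ne_top hAlt.ne hNlt.ne
  -- translation structure
  have hmpx : ∀ x : ℝ, MeasurePreserving (fun v : ℝ => x - v) volume volume := by
    intro x
    have hcomp := (measurePreserving_add_right (volume : Measure ℝ) x).comp
      (Measure.measurePreserving_neg (volume : Measure ℝ))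
    have : ((fun y : ℝ => y + x) ∘ (Neg.neg)) = fun v : ℝ => x - v := by
      funext v; simp [Function.comp, sub_eq_neg_add]
    rwa [this] at hcomp
  have hTx : ∀ x : ℝ, AEStronglyMeasurable (fun u => h₂ (x - u)) (volume : Measure ℝ) :=
    fun x => hh₂mem.1.comp_measurePreserving (hmpx x)
  have hTxI : ∀ x : ℝ, AEStronglyMeasurable (fun u => h₂ (x - u))
      (volume.restrict (Ioo (-π) π)) :=
    fun x => (hTx x).mono_measure Measure.restrict_le_self
  have hTnorm : ∀ x : ℝ, eLpNorm (fun u => h₂ (x - u)) q' (volume.restrict (Ioo (-π) π)) ≤ N := by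
    intro x
    refine le_trans (eLpNorm_mono_measure _ Measure.restrict_le_self) ?_
    rw [show (fun u => h₂ (x - u)) = h₂ ∘ (fun v : ℝ => x - v) from rfl,
      eLpNorm_comp_measurePreserving hh₂mem.1 (hmpx x)]
  have hTmem : ∀ x : ℝ, MemLp (fun u => h₂ (x - u)) q' (volume.restrict (Ioo (-π) π)) :=
    fun x => ⟨hTxI x, lt_of_le_of_lt (hTnorm x) hNlt⟩
  have hIntI : ∀ x : ℝ, Integrable (fun u => g₁ u * h₂ (x - u))
      (volume.restrict (Ioo (-π) π)) := by
    intro x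
    have hs : MemLp (g₁ • fun u => h₂ (x - u)) 1 (volume.restrict (Ioo (-π) π)) :=
      MemLp.smul (hTmem x) hg₁Lp
    exact (memLp_one_iff_integrable.1 hs).congr
      (Filter.Eventually.of_forall fun u => rfl)
  -- Hölder bound
  have hHold : ∀ x : ℝ, (∫ u in Ioo (-π) π, ‖g₁ u * h₂ (x - u)‖) ≤ (A * N).toReal := by
    intro x
    have heq : ENNReal.ofReal (∫ u in Ioo (-π) π, ‖g₁ u * h₂ (x - u)‖) =
        eLpNorm (g₁ • fun u => h₂ (x - u)) 1 (volume.restrict (Ioo (-π) π)) := by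
      rw [eLpNorm_one_eq_lintegral_enorm]
      exact ofReal_integral_norm_eq_lintegral_enorm (hIntI x)
    have hle : eLpNorm (g₁ • fun u => h₂ (x - u)) 1 (volume.restrict (Ioo (-π) π)) ≤ A * N := by
      refine le_trans (eLpNorm_smul_le_mul_eLpNorm (p := p') (q := q') (hTxI x) hg₁meas) ?_
      exact mul_le_mul_right (hTnorm x) A
    calc (∫ u in Ioo (-π) π, ‖g₁ u * h₂ (x - u)‖)
        = (ENNReal.ofReal (∫ u in Ioo (-π) π, ‖g₁ u * h₂ (x - u)‖)).toReal :=
          (ENNReal.toReal_ofReal (integral_nonneg fun u => norm_nonneg _)).symm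
      _ ≤ (A * N).toReal := by rw [heq]; exact ENNReal.toReal_mono hANtop hle
  -- rewriting the interval integral
  have hrepl : ∀ x ∈ Ioo (-π) π, ∀ u ∈ Ioo (-π) π, g₂ (x - u) = h₂ (x - u) := by
    intro x hx u hu
    rw [hh₂def, Set.indicator_of_mem]
    exact ⟨by linarith [hx.1, hu.2], by linarith [hx.2, hu.1]⟩
  have hIeq : ∀ x ∈ Ioo (-π) π, (∫ u in (-π)..π, g₁ u * g₂ (x - u)) =
      ∫ u in Ioo (-π) π, g₁ u * h₂ (x - u) := by
    intro x hx
    rw [intervalIntegral.integral_of_le (by linarith), integral_Ioc_eq_integral_Ioo]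
    exact setIntegral_congr_fun hIm fun u hu => by rw [hrepl x hx u hu]
  refine ⟨⟨(A * N).toReal, fun x hx => ?_⟩, ?_, ?_⟩
  · -- boundedness
    rw [hIeq x hx]
    calc |∫ u in Ioo (-π) π, g₁ u * h₂ (x - u)|
        ≤ ∫ u in Ioo (-π) π, ‖g₁ u * h₂ (x - u)‖ := by
          rw [← Real.norm_eq_abs]
          exact norm_integral_le_integral_norm _
      _ ≤ (A * N).toReal := hHold x
  · -- continuity
    intro x₀ hx₀
    have htt := aux_translate_tendsto hq'1 hq't hh₂mem
    refine Metric.tendsto_nhdsWithin_nhds.mpr ?_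
    intro ε hε
    set η : ℝ≥0∞ := ENNReal.ofReal (ε/2) / (A + 1) with hηdef
    have hA1top : A + 1 ≠ ∞ := ENNReal.add_ne_top.2 ⟨hAlt.ne, ENNReal.one_ne_top⟩
    have hA1ne : A + 1 ≠ 0 := by simp
    have hη0 : 0 < η :=
      ENNReal.div_pos (by simp only [ne_eq, ENNReal.ofReal_eq_zero, not_le]; linarith) hA1top
    have hηtop : η ≠ ∞ := (ENNReal.div_lt_top ENNReal.ofReal_ne_top hA1ne).ne
    have hAηtop : A * η ≠ ∞ := ENNReal.mul_ne_top hAlt.ne hηtop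
    have hev := (ENNReal.tendsto_nhds_zero.mp htt) η hη0
    obtain ⟨δ, hδ0, hδ⟩ := Metric.eventually_nhds_iff.mp hev
    refine ⟨δ, hδ0, fun x hx hdist => ?_⟩
    have hshift : eLpNorm (fun v => h₂ (v + (x - x₀)) - h₂ v) q' volume ≤ η := by
      refine hδ ?_
      rw [Real.dist_eq] at hdist ⊢
      simpa using hdist
    set Δ : ℝ → ℝ := fun u => h₂ (x - u) - h₂ (x₀ - u) with hΔdef
    have hΔm : AEStronglyMeasurable Δ (volume : Measure ℝ) := (hTx x).sub (hTx x₀)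
    have hΔmI : AEStronglyMeasurable Δ (volume.restrict (Ioo (-π) π)) :=
      hΔm.mono_measure Measure.restrict_le_self
    have hΔe : eLpNorm Δ q' (volume.restrict (Ioo (-π) π)) ≤ η := by
      refine le_trans (eLpNorm_mono_measure _ Measure.restrict_le_self) ?_
      have hcomp : Δ ∘ (fun v : ℝ => x₀ - v) = (fun v => h₂ (v + (x - x₀)) - h₂ v) := by
        funext v
        simp only [hΔdef, Function.comp_apply]
        have e1 : x - (x₀ - v) = v + (x - x₀) := by ring
        have e2 : x₀ - (x₀ - v) = v := by ring
        rw [e1, e2]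
      rw [← eLpNorm_comp_measurePreserving hΔm (hmpx x₀), hcomp]
      exact hshift
    -- the difference of the two integrals
    have hΔint : Integrable (fun u => g₁ u * Δ u) (volume.restrict (Ioo (-π) π)) := by
      have := (hIntI x).sub (hIntI x₀)
      refine this.congr (Filter.Eventually.of_forall fun u => ?_)
      simp only [hΔdef, Pi.sub_apply]
      ring
    have key : dist (∫ u in (-π)..π, g₁ u * g₂ (x - u)) (∫ u in (-π)..π, g₁ u * g₂ (x₀ - u))
        ≤ (A * η).toReal := by
      rw [Real.dist_eq, hIeq x hx, hIeq x₀ hx₀, ← integral_sub (hIntI x) (hIntI x₀)]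
      have hfun : (fun u => g₁ u * h₂ (x - u) - g₁ u * h₂ (x₀ - u)) = fun u => g₁ u * Δ u := by
        funext u; simp only [hΔdef]; ring
      rw [hfun]
      have heq : ENNReal.ofReal (∫ u in Ioo (-π) π, ‖g₁ u * Δ u‖) =
          eLpNorm (g₁ • Δ) 1 (volume.restrict (Ioo (-π) π)) := by
        rw [eLpNorm_one_eq_lintegral_enorm]
        exact ofReal_integral_norm_eq_lintegral_enorm hΔint
      have hle : eLpNorm (g₁ • Δ) 1 (volume.restrict (Ioo (-π) π)) ≤ A * η := by
        refine le_trans (eLpNorm_smul_le_mul_eLpNorm (p := p') (q := q') hΔmI hg₁meas) ?_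
        exact mul_le_mul_right hΔe A
      calc |∫ u in Ioo (-π) π, g₁ u * Δ u|
          ≤ ∫ u in Ioo (-π) π, ‖g₁ u * Δ u‖ := by
            rw [← Real.norm_eq_abs]
            exact norm_integral_le_integral_norm _
        _ = (ENNReal.ofReal (∫ u in Ioo (-π) π, ‖g₁ u * Δ u‖)).toReal :=
            (ENNReal.toReal_ofReal (integral_nonneg fun u => norm_nonneg _)).symm
        _ ≤ (A * η).toReal := by rw [heq]; exact ENNReal.toReal_mono hAηtop hle
    have hfinal : (A * η).toReal ≤ ε/2 := by
      have hAη : A * η ≤ ENNReal.ofReal (ε/2) := by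
        rw [hηdef]
        calc A * (ENNReal.ofReal (ε/2) / (A+1))
            ≤ (A+1) * (ENNReal.ofReal (ε/2) / (A+1)) := by
              exact mul_le_mul_left le_self_add _
          _ = ENNReal.ofReal (ε/2) := ENNReal.mul_div_cancel' (fun h => absurd h hA1ne) (fun h => absurd h hA1top)
      refine le_trans (ENNReal.toReal_mono ENNReal.ofReal_ne_top hAη) ?_
      rw [ENNReal.toReal_ofReal (by linarith)]
    calc dist (∫ u in (-π)..π, g₁ u * g₂ (x - u)) (∫ u in (-π)..π, g₁ u * g₂ (x₀ - u))
        ≤ (A * η).toReal := key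
      _ ≤ ε/2 := hfinal
      _ < ε := by linarith
  · -- positivity
    have h0mem : (0:ℝ) ∈ Ioo (-π) π := ⟨by linarith, hπ⟩
    rw [intervalIntegral.integral_of_le (by linarith), integral_Ioc_eq_integral_Ioo]
    have hIntOrig : IntegrableOn (fun u => g₁ u * g₂ (0 - u)) (Ioo (-π) π) volume := by
      refine (hIntI 0).congr ?_
      filter_upwards [ae_restrict_mem hIm] with u hu
      rw [hrepl 0 h0mem u hu]
    have hnnae : 0 ≤ᵐ[volume.restrict (Ioo (-π) π)] fun u => g₁ u * g₂ (0 - u) := by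
      filter_upwards [ae_restrict_mem hIm, ae_restrict_of_ae h3pts] with u hu hu3
      have hu0 : u ≠ 0 := fun h => hu3 (by simp [h])
      have hmu : -u ∈ Ioo (-π) π := ⟨by linarith [hu.2], by linarith [hu.1]⟩
      simp only [Pi.zero_apply, zero_sub]
      rw [hrep₁ u hu hu0, hrep₂ (-u) hmu (neg_ne_zero.2 hu0)]
      have t1 : (0:ℝ) ≤ |u| ^ (-β₁) := rpow_nonneg (abs_nonneg _) _
      have t2 : (0:ℝ) ≤ |(-u)| ^ (-β₂) := rpow_nonneg (abs_nonneg _) _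
      exact mul_nonneg (mul_nonneg t1 (hnn₁ u)) (mul_nonneg t2 (hnn₂ (-u)))
    rw [setIntegral_pos_iff_support_of_nonneg_ae hnnae hIntOrig]
    obtain ⟨δ₁, hδ₁0, hδ₁⟩ := Metric.continuousAt_iff.mp hcont₁ (g₁s 0 / 2) (by linarith)
    obtain ⟨δ₂, hδ₂0, hδ₂⟩ := Metric.continuousAt_iff.mp hcont₂ (g₂s 0 / 2) (by linarith)
    set δ := min (min δ₁ δ₂) π with hδdef
    have hδ0 : 0 < δ := lt_min (lt_min hδ₁0 hδ₂0) hπ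
    have hδπ : δ ≤ π := min_le_right _ _
    have hδ₁' : δ ≤ δ₁ := le_trans (min_le_left _ _) (min_le_left _ _)
    have hδ₂' : δ ≤ δ₂ := le_trans (min_le_left _ _) (min_le_right _ _)
    have hsub : Ioo 0 δ ⊆ Function.support (fun u => g₁ u * g₂ (0 - u)) ∩ Ioo (-π) π := by
      intro u hu
      obtain ⟨hu0, huδ⟩ := hu
      have huI : u ∈ Ioo (-π) π := ⟨by linarith, by linarith⟩
      have hmuI : -u ∈ Ioo (-π) π := ⟨by linarith, by linarith⟩
      have h1 : g₁s 0 / 2 < g₁s u := by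
        have hd : dist u 0 < δ₁ := by
          rw [Real.dist_eq, sub_zero, abs_of_pos hu0]; linarith
        have := hδ₁ hd
        rw [Real.dist_eq] at this
        have := abs_lt.1 this
        linarith [this.1]
      have h2 : g₂s 0 / 2 < g₂s (-u) := by
        have hd : dist (-u) 0 < δ₂ := by
          rw [Real.dist_eq, sub_zero, abs_neg, abs_of_pos hu0]; linarith
        have := hδ₂ hd
        rw [Real.dist_eq] at this
        have := abs_lt.1 this
        linarith [this.1]
      refine ⟨?_, huI⟩
      rw [Function.mem_support, zero_sub, hrep₁ u huI hu0.ne', hrep₂ (-u) hmuI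
        (neg_ne_zero.2 hu0.ne')]
      have t1 : (0:ℝ) < |u| ^ (-β₁) := rpow_pos_of_pos (abs_pos.2 hu0.ne') _
      have t2 : (0:ℝ) < |(-u)| ^ (-β₂) := rpow_pos_of_pos (abs_pos.2 (neg_ne_zero.2 hu0.ne')) _
      exact (mul_pos (mul_pos t1 (by linarith)) (mul_pos t2 (by linarith))).ne'
    refine lt_of_lt_of_le ?_ (measure_mono hsub)
    rw [Real.volume_Ioo]
    simpa using hδ0
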